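/- Let d ≥ 1 and let ℓ₀, …, ℓ_d be integers. Define integers A_{m,k} for 1 ≤ m ≤ d and 0 ≤ k ≤ m by: A_{m,m} = 1, A_{m,m−1} = ℓ_{m−1} − ℓ_m − 1, and A_{m,k} = ℓ_{m−1} A_{m−1,k} − ℓ_{k+1} A_{m,k+1} for k < m − 1. Then for all 1 ≤ m ≤ d and 0 ≤ k < m − 1, A_{m,k} = (∏_{k<j<m} ℓ_j) · Σ_{j=k}^{m} binom(m−k, j−k)(−1)^{j−k} ℓ_j. -/

import Mathlib

open Finset

lemma pascal_sum13 (g : ℕ → ℤ) (M : ℕ) :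
    ∑ i ∈ range (M + 2), ((M + 1).choose i : ℤ) * (-1) ^ i * g i =
      ∑ i ∈ range (M + 1), (M.choose i : ℤ) * (-1) ^ i * g i
      - ∑ i ∈ range (M + 1), (M.choose i : ℤ) * (-1) ^ i * g (i + 1) := by
  rw [Finset.sum_range_succ' (fun i => ((M + 1).choose i : ℤ) * (-1) ^ i * g i) (M + 1),
      Finset.sum_range_succ' (fun i => (M.choose i : ℤ) * (-1) ^ i * g i) M]
  simp only [Nat.choose_succ_succ, Nat.choose_zero_right]
  push_cast
  simp only [add_mul, Finset.sum_add_distrib]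
  rw [Finset.sum_range_succ (fun i => (M.choose (i + 1) : ℤ) * (-1) ^ (i + 1) * g (i + 1)) M]
  simp [Nat.choose_succ_self, pow_succ]
  ring_nf

lemma sum_Icc_to_range13 (f : ℕ → ℤ) (k N : ℕ) :
    ∑ j ∈ Finset.Icc k (k + N), f j = ∑ i ∈ range (N + 1), f (k + i) := by
  rw [← Finset.Ico_add_one_right_eq_Icc, Finset.sum_Ico_eq_sum_range]
  have h : k + N + 1 - k = N + 1 := by omega
  rw [h]

theorem stmt13 (d : ℕ) (hd : 1 ≤ d) (ℓ : ℕ → ℤ) (A : ℕ → ℕ → ℤ)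
    (hAmm : ∀ m, 1 ≤ m → m ≤ d → A m m = 1)
    (hAmm1 : ∀ m, 1 ≤ m → m ≤ d → A m (m - 1) = ℓ (m - 1) - ℓ m - 1)
    (hArec : ∀ m k, 1 ≤ m → m ≤ d → k + 1 < m →
      A m k = ℓ (m - 1) * A (m - 1) k - ℓ (k + 1) * A m (k + 1)) :
    ∀ m k, 1 ≤ m → m ≤ d → k + 1 < m →
      A m k = (∏ j ∈ Finset.Ioo k m, ℓ j) *
        ∑ j ∈ Finset.Icc k m, ((m - k).choose (j - k) : ℤ) * (-1) ^ (j - k) * ℓ j := by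
  have key : ∀ n k, k + 2 + n ≤ d →
      A (k + 2 + n) k = (∏ j ∈ Finset.Ioo k (k + 2 + n), ℓ j) *
        ∑ j ∈ Finset.Icc k (k + 2 + n),
          (((k + 2 + n) - k).choose (j - k) : ℤ) * (-1) ^ (j - k) * ℓ j := by
    intro n
    induction n with
    | zero =>
      intro k hkd
      have h1 : A (k + 2) k = ℓ (k + 1) * A (k + 1) k - ℓ (k + 1) * A (k + 2) (k + 1) := by
        have := hArec (k + 2) k (by omega) (by omega) (by omega)
        simpa using this
      have h2 : A (k + 1) k = ℓ k - ℓ (k + 1) - 1 := by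
        have := hAmm1 (k + 1) (by omega) (by omega)
        simpa using this
      have h3 : A (k + 2) (k + 1) = ℓ (k + 1) - ℓ (k + 2) - 1 := by
        have := hAmm1 (k + 2) (by omega) (by omega)
        simpa using this
      have hprod : Finset.Ioo k (k + 2 + 0) = {k + 1} := by
        ext x; simp [Finset.mem_Ioo]; omega
      have hsum : ∑ j ∈ Finset.Icc k (k + 2 + 0),
          (((k + 2 + 0) - k).choose (j - k) : ℤ) * (-1) ^ (j - k) * ℓ j
          = ℓ k - 2 * ℓ (k + 1) + ℓ (k + 2) := by
        have : k + 2 + 0 = k + 2 := by ring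
        rw [this, sum_Icc_to_range13 (fun j => (((k + 2) - k).choose (j - k) : ℤ) * (-1) ^ (j - k) * ℓ j) k 2]
        have e1 : k + 2 - k = 2 := by omega
        rw [Finset.sum_range_succ, Finset.sum_range_succ, Finset.sum_range_one]
        simp only [e1, Nat.add_sub_cancel_left, Nat.sub_self]
        norm_num
        ring
      rw [hprod, hsum, h1, h2, h3]
      simp
      ring
    | succ n ih =>
      intro k hkd
      set m := k + 2 + (n + 1) with hm
      have h1 : A m k = ℓ (m - 1) * A (m - 1) k - ℓ (k + 1) * A m (k + 1) :=
        hArec m k (by omega) hkd (by omega)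
      have hm1 : m - 1 = k + 2 + n := by omega
      have h2 : A (m - 1) k = (∏ j ∈ Finset.Ioo k (k + 2 + n), ℓ j) *
          ∑ j ∈ Finset.Icc k (k + 2 + n),
            (((k + 2 + n) - k).choose (j - k) : ℤ) * (-1) ^ (j - k) * ℓ j := by
        rw [hm1]; exact ih k (by omega)
      have hm2 : m = (k + 1) + 2 + n := by omega
      have h3 : A m (k + 1) = (∏ j ∈ Finset.Ioo (k + 1) ((k + 1) + 2 + n), ℓ j) *
          ∑ j ∈ Finset.Icc (k + 1) ((k + 1) + 2 + n),
            ((((k + 1) + 2 + n) - (k + 1)).choose (j - (k + 1)) : ℤ) * (-1) ^ (j - (k + 1)) * ℓ j := by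
        rw [hm2]; exact ih (k + 1) (by omega)
      rw [h1, h2, h3, hm1]
      -- product identities
      have hP1 : ℓ (k + 2 + n) * ∏ j ∈ Finset.Ioo k (k + 2 + n), ℓ j
          = ∏ j ∈ Finset.Ioo k m, ℓ j := by
        rw [← Finset.Ico_add_one_left_eq_Ioo, ← Finset.Ico_add_one_left_eq_Ioo]
        have : m = (k + 2 + n) + 1 := by omega
        rw [this, Finset.prod_Ico_succ_top (by omega) ℓ]
        ring
      have hP2 : ℓ (k + 1) * ∏ j ∈ Finset.Ioo (k + 1) ((k + 1) + 2 + n), ℓ j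
          = ∏ j ∈ Finset.Ioo k m, ℓ j := by
        rw [← Finset.Ico_add_one_left_eq_Ioo, ← Finset.Ico_add_one_left_eq_Ioo]
        have h : (k + 1 : ℕ) < m := by omega
        rw [Finset.prod_eq_prod_Ico_succ_bot h ℓ]
        have : (k + 1) + 2 + n = m := by omega
        rw [this]
      -- sum identities via range
      have hS : ∑ j ∈ Finset.Icc k m, ((m - k).choose (j - k) : ℤ) * (-1) ^ (j - k) * ℓ j
          = (∑ j ∈ Finset.Icc k (k + 2 + n),
              (((k + 2 + n) - k).choose (j - k) : ℤ) * (-1) ^ (j - k) * ℓ j)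
            - ∑ j ∈ Finset.Icc (k + 1) ((k + 1) + 2 + n),
              ((((k + 1) + 2 + n) - (k + 1)).choose (j - (k + 1)) : ℤ) * (-1) ^ (j - (k + 1)) * ℓ j := by
        have e0 : m = k + (n + 3) := by omega
        have r0 : ∑ j ∈ Finset.Icc k m, ((m - k).choose (j - k) : ℤ) * (-1) ^ (j - k) * ℓ j
            = ∑ i ∈ range (n + 4), (((n + 3)).choose i : ℤ) * (-1) ^ i * ℓ (k + i) := by
          rw [e0, sum_Icc_to_range13 (fun j => ((k + (n + 3) - k).choose (j - k) : ℤ) * (-1) ^ (j - k) * ℓ j) k (n + 3)]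
          apply Finset.sum_congr rfl
          intro i _
          congr 2 <;> simp [Nat.add_sub_cancel_left] <;> congr 1 <;> omega
        have r1 : ∑ j ∈ Finset.Icc k (k + 2 + n),
              (((k + 2 + n) - k).choose (j - k) : ℤ) * (-1) ^ (j - k) * ℓ j
            = ∑ i ∈ range (n + 3), (((n + 2)).choose i : ℤ) * (-1) ^ i * ℓ (k + i) := by
          have : k + 2 + n = k + (n + 2) := by omega
          rw [this, sum_Icc_to_range13 (fun j => ((k + (n + 2) - k).choose (j - k) : ℤ) * (-1) ^ (j - k) * ℓ j) k (n + 2)]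
          apply Finset.sum_congr rfl
          intro i _
          congr 2 <;> simp [Nat.add_sub_cancel_left] <;> congr 1 <;> omega
        have r2 : ∑ j ∈ Finset.Icc (k + 1) ((k + 1) + 2 + n),
              ((((k + 1) + 2 + n) - (k + 1)).choose (j - (k + 1)) : ℤ) * (-1) ^ (j - (k + 1)) * ℓ j
            = ∑ i ∈ range (n + 3), (((n + 2)).choose i : ℤ) * (-1) ^ i * ℓ (k + (i + 1)) := by
          have : (k + 1) + 2 + n = (k + 1) + (n + 2) := by omega
          rw [this, sum_Icc_to_range13 (fun j => (((k + 1) + (n + 2) - (k + 1)).choose (j - (k + 1)) : ℤ) * (-1) ^ (j - (k + 1)) * ℓ j) (k + 1) (n + 2)]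
          apply Finset.sum_congr rfl
          intro i _
          have e1 : (k + 1) + (n + 2) - (k + 1) = n + 2 := by omega
          have e2 : (k + 1 + i) - (k + 1) = i := by omega
          have e3 : k + 1 + i = k + (i + 1) := by omega
          rw [e1, e2, e3]
        rw [r0, r1, r2]
        have := pascal_sum13 (fun i => ℓ (k + i)) (n + 2)
        simpa using this
      rw [hS, mul_sub]
      congr 1
      · rw [← hP1]; ring
      · rw [← hP2]; ring
  intro m k h1m hmd hk
  obtain ⟨n, hn⟩ : ∃ n, m = k + 2 + n := ⟨m - k - 2, by omega⟩
  subst hn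
  exact key n k hmd
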